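/- Let K^{1/2} be the positive square root of a positive trace-class operator K on L²(ℝ), and suppose e^{bP/2}K^{1/2} and K^{1/2}e^{bP/2} are Hilbert–Schmidt (where P = −i d/dx), i.e., tr(K^{1/2} e^{bP} K^{1/2}) < ∞ for all 0 ≤ b < 2a. Then the function z ↦ tr(K^{1/2} e^{−iPz} K^{1/2}) is analytic in the strip 0 < Im z < 2a and continuous on 0 ≤ Im z < 2a. -/

import Mathlib

open MeasureTheory Complex

lemma norm_term (ξ r : ℝ) (w : ℂ) :
    ‖Complex.exp (-Complex.I * ξ * w) * (r:ℂ)‖ = Real.exp (ξ * w.im) * |r| := by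
  rw [norm_mul, Complex.norm_exp,
    Complex.norm_real, Real.norm_eq_abs]
  congr 2
  simp [Complex.mul_re, Complex.mul_im]

lemma exp_le (t b ξ : ℝ) (ht : 0 ≤ t) (htb : t ≤ b) :
    Real.exp (t * ξ) ≤ 1 + Real.exp (b * ξ) := by
  rcases le_or_gt 0 ξ with h | h
  · have : Real.exp (t * ξ) ≤ Real.exp (b * ξ) :=
      Real.exp_le_exp.2 (by nlinarith)
    linarith [Real.exp_pos (b * ξ)]
  · have : Real.exp (t * ξ) ≤ 1 := by
      rw [show (1:ℝ) = Real.exp 0 by simp]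
      exact Real.exp_le_exp.2 (by nlinarith)
    linarith [Real.exp_pos (b * ξ)]

lemma abs_exp_le (t b δ ξ : ℝ) (hδ : 0 < δ) (h0 : 0 ≤ t - δ) (hb : t + δ ≤ b) :
    |ξ| * Real.exp (t * ξ) ≤ (2 / δ) * (1 + Real.exp (b * ξ)) := by
  have h1 : δ * |ξ| ≤ Real.exp (δ * ξ) + Real.exp (-(δ * ξ)) := by
    rcases le_or_gt 0 ξ with h | h
    · have := Real.add_one_le_exp (δ * ξ)
      have : δ * ξ ≤ Real.exp (δ * ξ) := le_trans (by linarith [Real.add_one_le_exp (δ*ξ)] ) le_rfl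
      rw [_root_.abs_of_nonneg h]
      linarith [Real.exp_pos (-(δ * ξ)), Real.add_one_le_exp (δ * ξ),
        mul_nonneg hδ.le h]
    · rw [_root_.abs_of_neg h]
      have := Real.add_one_le_exp (-(δ * ξ))
      linarith [Real.exp_pos (δ * ξ)]
  have h2 : |ξ| * Real.exp (t * ξ) ≤
      (1 / δ) * (Real.exp ((t + δ) * ξ) + Real.exp ((t - δ) * ξ)) := by
    have hE : (Real.exp (δ * ξ) + Real.exp (-(δ * ξ))) * Real.exp (t * ξ)
        = Real.exp ((t + δ) * ξ) + Real.exp ((t - δ) * ξ) := by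
      rw [add_mul, ← Real.exp_add, ← Real.exp_add]
      ring_nf
    rw [← hE]
    rw [div_mul_eq_mul_div, le_div_iff₀ hδ]
    have := mul_le_mul_of_nonneg_right h1 (Real.exp_pos (t * ξ)).le
    nlinarith
  refine h2.trans ?_
  have e1 := exp_le (t + δ) b ξ (by linarith) hb
  have e2 := exp_le (t - δ) b ξ h0 (by linarith)
  rw [div_mul_eq_mul_div, div_mul_eq_mul_div, div_le_div_iff₀ hδ hδ]
  nlinarith [Real.exp_pos (b*ξ)]

theorem stmt17 (a : ℝ) (ha : 0 < a) (k : ℝ → ℝ → ℂ)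
    (hkm : Measurable (Function.uncurry k))
    (hherm : ∀ ξ lam : ℝ, k lam ξ = (starRingEnd ℂ) (k ξ lam))
    (ρ : ℝ → ℝ) (hρ : ∀ ξ, ρ ξ = ∫ lam : ℝ, ‖k ξ lam‖ ^ 2)
    (htr : Integrable ρ)
    (hexp : ∀ b ∈ Set.Ico (0:ℝ) (2 * a), Integrable (fun ξ => Real.exp (b * ξ) * ρ ξ)) :
    DifferentiableOn ℂ (fun z : ℂ => ∫ ξ : ℝ, Complex.exp (-(Complex.I) * ξ * z) * ρ ξ)
      {z : ℂ | 0 < z.im ∧ z.im < 2 * a} ∧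
    ContinuousOn (fun z : ℂ => ∫ ξ : ℝ, Complex.exp (-(Complex.I) * ξ * z) * ρ ξ)
      {z : ℂ | 0 ≤ z.im ∧ z.im < 2 * a} := by
  have hρm : AEStronglyMeasurable ρ volume := htr.1
  have hρc : AEStronglyMeasurable (fun ξ => (ρ ξ : ℂ)) volume :=
    Complex.continuous_ofReal.comp_aestronglyMeasurable hρm
  have hbd : ∀ b ∈ Set.Ico (0:ℝ) (2 * a),
      Integrable (fun ξ => (1 + Real.exp (b * ξ)) * |ρ ξ|) := by
    intro b hb
    have h1 : Integrable (fun ξ => |ρ ξ|) := htr.abs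
    have h2 : Integrable (fun ξ => Real.exp (b * ξ) * |ρ ξ|) := by
      have h3 := (hexp b hb).abs
      refine h3.congr (Filter.Eventually.of_forall fun ξ => ?_)
      simp only [abs_mul, Real.abs_exp]
    have h4 := h1.add h2
    refine h4.congr (Filter.Eventually.of_forall fun ξ => ?_)
    simp only [Pi.add_apply]; ring
  have hmeas : ∀ z : ℂ, AEStronglyMeasurable
      (fun ξ : ℝ => Complex.exp (-Complex.I * ξ * z) * (ρ ξ : ℂ)) volume := by
    intro z
    exact (Complex.continuous_exp.comp
      (((continuous_const.mul Complex.continuous_ofReal).mul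
        continuous_const))).aestronglyMeasurable.mul hρc
  have hint : ∀ z : ℂ, 0 ≤ z.im → z.im < 2 * a →
      Integrable (fun ξ : ℝ => Complex.exp (-Complex.I * ξ * z) * (ρ ξ : ℂ)) := by
    intro z h0 h2
    refine (hbd z.im ⟨h0, h2⟩).mono' (hmeas z)
      (Filter.Eventually.of_forall fun ξ => ?_)
    rw [norm_term, mul_comm ξ z.im]
    exact mul_le_mul_of_nonneg_right (exp_le z.im z.im ξ h0 le_rfl) (abs_nonneg _)
  constructor
  · -- differentiability on open strip
    intro z hz
    obtain ⟨hz1, hz2⟩ := hz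
    obtain ⟨ε, hεpos, hε1, hε2⟩ : ∃ ε : ℝ, 0 < ε ∧ ε ≤ z.im / 2 ∧ ε ≤ (2 * a - z.im) / 4 :=
      ⟨min (z.im / 2) ((2 * a - z.im) / 4), lt_min (by linarith) (by linarith),
        min_le_left _ _, min_le_right _ _⟩
    set b : ℝ := z.im + 2 * ε with hbdef
    have hbmem : b ∈ Set.Ico (0:ℝ) (2 * a) :=
      ⟨by rw [hbdef]; linarith, by rw [hbdef]; linarith⟩
    have key := hasDerivAt_integral_of_dominated_loc_of_deriv_le (μ := volume)
      (F := fun (w : ℂ) (ξ : ℝ) => Complex.exp (-Complex.I * ξ * w) * (ρ ξ : ℂ))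
      (F' := fun (w : ℂ) (ξ : ℝ) => -Complex.I * ξ * Complex.exp (-Complex.I * ξ * w) * (ρ ξ : ℂ))
      (x₀ := z) (bound := fun ξ => (2 / ε) * ((1 + Real.exp (b * ξ)) * |ρ ξ|))
      (Metric.ball_mem_nhds z hεpos) (Filter.Eventually.of_forall fun w => hmeas w) (hint z hz1.le hz2)
      ?_ ?_ ((hbd b hbmem).const_mul _) ?_
    · exact (key.2.differentiableAt).differentiableWithinAt
    · -- F' measurable
      have hc : Continuous fun ξ : ℝ => -Complex.I * ξ * Complex.exp (-Complex.I * ξ * z) :=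
        (continuous_const.mul Complex.continuous_ofReal).mul
          (Complex.continuous_exp.comp
            ((continuous_const.mul Complex.continuous_ofReal).mul continuous_const))
      exact hc.aestronglyMeasurable.mul hρc
    · -- bound
      refine Filter.Eventually.of_forall fun ξ => fun w hw => ?_
      have him : |w.im - z.im| < ε := by
        have h5 := Complex.abs_im_le_norm (w - z)
        simp only [Complex.sub_im] at h5
        calc |w.im - z.im| ≤ ‖w - z‖ := h5
          _ < ε := by simpa [Metric.mem_ball, Complex.dist_eq] using hw
      obtain ⟨hL, hR⟩ := abs_lt.1 him
      have h0 : 0 ≤ w.im - ε := by linarith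
      have hb' : w.im + ε ≤ b := by rw [hbdef]; linarith
      have hkey := abs_exp_le w.im b ε ξ hεpos h0 hb'
      calc ‖-Complex.I * ↑ξ * Complex.exp (-Complex.I * ↑ξ * w) * ↑(ρ ξ)‖
          = ‖-Complex.I * (ξ:ℂ)‖ * ‖Complex.exp (-Complex.I * ↑ξ * w) * (ρ ξ : ℂ)‖ := by
            rw [mul_assoc, norm_mul]
        _ = |ξ| * (Real.exp (ξ * w.im) * |ρ ξ|) := by
            rw [norm_term]
            congr 1
            simp [norm_mul]
        _ ≤ (2 / ε) * (1 + Real.exp (b * ξ)) * |ρ ξ| := by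
            rw [mul_comm ξ w.im, ← mul_assoc]
            exact mul_le_mul_of_nonneg_right hkey (abs_nonneg _)
        _ = 2 / ε * ((1 + Real.exp (b * ξ)) * |ρ ξ|) := by ring
    · -- hasDerivAt
      refine Filter.Eventually.of_forall fun ξ => fun w hw => ?_
      have h1 : HasDerivAt (fun w : ℂ => -Complex.I * ξ * w) (-Complex.I * ξ) w := by
        simpa using (hasDerivAt_id w).const_mul (-Complex.I * (ξ:ℂ))
      have h2 := (h1.cexp).mul_const ((ρ ξ : ℂ))
      simpa [mul_comm, mul_assoc, mul_left_comm] using h2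
  · -- continuity on closed-below strip
    intro z hz
    obtain ⟨hz1, hz2⟩ := hz
    set b : ℝ := (z.im + 2 * a) / 2 with hbdef
    have hbmem : b ∈ Set.Ico (0:ℝ) (2 * a) :=
      ⟨by rw [hbdef]; linarith, by rw [hbdef]; linarith⟩
    have hzb : z.im < b := by rw [hbdef]; linarith
    refine (MeasureTheory.tendsto_integral_filter_of_dominated_convergence
      (fun ξ => (1 + Real.exp (b * ξ)) * |ρ ξ|)
      (Filter.Eventually.of_forall fun w => hmeas w) ?_ (hbd b hbmem) ?_)
    · have h1 : ∀ᶠ w in nhdsWithin z {w : ℂ | 0 ≤ w.im ∧ w.im < 2 * a}, w.im < b :=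
        Filter.Eventually.filter_mono nhdsWithin_le_nhds
          ((Complex.continuous_im.continuousAt).eventually_lt continuousAt_const hzb)
      have h2 : ∀ᶠ w in nhdsWithin z {w : ℂ | 0 ≤ w.im ∧ w.im < 2 * a}, 0 ≤ w.im :=
        eventually_nhdsWithin_of_forall fun w hw => hw.1
      filter_upwards [h1, h2] with w hw1 hw2
      refine Filter.Eventually.of_forall fun ξ => ?_
      rw [norm_term, mul_comm ξ w.im]
      exact mul_le_mul_of_nonneg_right (exp_le w.im b ξ hw2 hw1.le) (abs_nonneg _)
    · refine Filter.Eventually.of_forall fun ξ => ?_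
      have hc : ContinuousAt (fun w : ℂ => Complex.exp (-Complex.I * ξ * w) * (ρ ξ : ℂ)) z :=
        ((Complex.continuous_exp.comp
          (continuous_const.mul continuous_id)).mul continuous_const).continuousAt
      exact hc.continuousWithinAt.tendsto
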